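/- arXiv:0909.0811 — 2 statements merged into one kernel-verified Lean document; each statement's English description precedes it below -/
import Mathlib

section
/- For every a ∈ F_q^*, Σ_{w ∈ SO^-(2,q)} λ(a·Tr(w)) = −K(λ; a²), where Tr denotes the matrix trace. -/
open Matrix
open scoped BigOperators Classical

noncomputable section

abbrev Fq (r : ℕ) : Type := GaloisField 3 r
noncomputable instance (r : ℕ) : Fintype (Fq r) := Fintype.ofFinite _

def lam (r : ℕ) (x : Fq r) : ℂ :=
  Complex.exp (2 * Real.pi * Complex.I * ((Algebra.trace (ZMod 3) (Fq r) x).val : ℂ) / 3)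

def Kl (r : ℕ) (a : Fq r) : ℂ :=
  ∑ α ∈ Finset.univ.filter (fun α : Fq r => α ≠ 0), lam r (α + a * α⁻¹)

def SOminus2 (r : ℕ) (ε : Fq r) : Finset (Matrix (Fin 2) (Fin 2) (Fq r)) :=
  Finset.univ.filter (fun w => ∃ a b : Fq r, a ^ 2 - ε * b ^ 2 = 1 ∧ w = !![a, b * ε; b, a])

lemma three_eq_zero (r : ℕ) : (3 : Fq r) = 0 := by
  exact_mod_cast CharP.cast_eq_zero (Fq r) 3

lemma ringChar_Fq (r : ℕ) : ringChar (Fq r) = 3 := ringChar.eq _ 3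

lemma ringChar_Fq_ne_two (r : ℕ) : ringChar (Fq r) ≠ 2 := by
  rw [ringChar_Fq]; decide

lemma lam_add (r : ℕ) (x y : Fq r) : lam r (x + y) = lam r x * lam r y := by
  unfold lam
  rw [← Complex.exp_add, map_add]
  set u := (Algebra.trace (ZMod 3) (Fq r) x).val with hu
  set v := (Algebra.trace (ZMod 3) (Fq r) y).val with hv
  rw [ZMod.val_add]
  set q : ℕ := (u + v) / 3 with hqdef
  set s : ℕ := (u + v) % 3 with hsdef
  have hq : u + v = 3 * q + s := (Nat.div_add_mod _ _).symm
  have hc : (u : ℂ) + v = 3 * (q : ℂ) + (s : ℂ) := by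
    exact_mod_cast congrArg (Nat.cast : ℕ → ℂ) hq
  have harg : 2 * (Real.pi : ℂ) * Complex.I * (s : ℕ) / 3
      = -(((q : ℕ) : ℂ) * (2 * Real.pi * Complex.I))
        + (2 * Real.pi * Complex.I * u / 3 + 2 * Real.pi * Complex.I * v / 3) := by
    field_simp
    linear_combination -hc
  rw [harg, Complex.exp_add]
  have h1 : Complex.exp (-(((q : ℕ) : ℂ) * (2 * Real.pi * Complex.I))) = 1 := by
    have := Complex.exp_int_mul_two_pi_mul_I (-(q : ℤ))
    rw [← this]
    congr 1
    push_cast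
    ring
  rw [h1, one_mul]

lemma sum_lam (r : ℕ) : ∑ x : Fq r, lam r x = 0 := by
  obtain ⟨x₀, hx₀⟩ : ∃ x : Fq r, Algebra.trace (ZMod 3) (Fq r) x ≠ 0 := by
    have h := Algebra.trace_ne_zero (ZMod 3) (Fq r)
    by_contra hcon
    push_neg at hcon
    exact h (by ext x; simpa using hcon x)
  have hne : lam r x₀ ≠ 1 := by
    intro h
    unfold lam at h
    rw [Complex.exp_eq_one_iff] at h
    obtain ⟨n, hn⟩ := h
    set v := (Algebra.trace (ZMod 3) (Fq r) x₀).val with hvdef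
    have hpc : (v : ℂ) * (2 * Real.pi * Complex.I) = (3 * n : ℂ) * (2 * Real.pi * Complex.I) := by
      linear_combination 3 * hn
    have hpi : (2 * (Real.pi : ℂ) * Complex.I) ≠ 0 := by
      simp [Real.pi_ne_zero, Complex.I_ne_zero]
    have hvc : (v : ℂ) = 3 * n := mul_right_cancel₀ hpi hpc
    have hvz : (v : ℤ) = 3 * n := by exact_mod_cast hvc
    have hv3 : v < 3 := ZMod.val_lt _
    have hv0 : v ≠ 0 := by
      simpa [hvdef, ZMod.val_eq_zero] using hx₀
    omega
  have hbij : ∑ x : Fq r, lam r (x₀ + x) = ∑ x : Fq r, lam r x :=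
    Fintype.sum_bijective (fun x => x₀ + x) (Equiv.addLeft x₀).bijective _ _ (fun x => rfl)
  have hmul : ∑ x : Fq r, lam r (x₀ + x) = lam r x₀ * ∑ x : Fq r, lam r x := by
    rw [Finset.mul_sum]
    exact Finset.sum_congr rfl fun x _ => lam_add r x₀ x
  have : (lam r x₀ - 1) * ∑ x : Fq r, lam r x = 0 := by
    rw [sub_mul, one_mul, ← hmul, hbij, sub_self]
  rcases mul_eq_zero.mp this with h | h
  · exact absurd (by linear_combination h) hne
  · exact h

lemma countL (r : ℕ) (ε : Fq r) (hε : ε ≠ 0) (α : Fq r) :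
    (((Finset.univ : Finset (Fq r)).filter (fun β => α ^ 2 - ε * β ^ 2 = 1)).card : ℤ)
      = quadraticChar (Fq r) ((α ^ 2 - 1) * ε⁻¹) + 1 := by
  rw [← quadraticChar_card_sqrts (ringChar_Fq_ne_two r) ((α ^ 2 - 1) * ε⁻¹)]
  congr 1
  congr 1
  ext β
  simp only [Finset.mem_filter, Finset.mem_univ, true_and, Set.mem_toFinset, Set.mem_setOf_eq]
  constructor
  · intro h
    field_simp
    linear_combination -h
  · intro h
    field_simp at h
    linear_combination -h

lemma countK (r : ℕ) (a : Fq r) (ha : a ≠ 0) (t : Fq r) :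
    ((((Finset.univ : Finset (Fq r)).filter (fun α => α ≠ 0)).filter
        (fun α => α + a ^ 2 * α⁻¹ = t)).card : ℤ)
      = quadraticChar (Fq r) (t ^ 2 - a ^ 2) + 1 := by
  have h3 := three_eq_zero r
  rw [← quadraticChar_card_sqrts (ringChar_Fq_ne_two r) (t ^ 2 - a ^ 2)]
  congr 1
  apply Finset.card_nbij' (fun α => α + t) (fun x => x - t)
  · intro α hα
    simp only [Finset.mem_coe, Finset.mem_filter, Finset.mem_univ, true_and] at hα
    obtain ⟨hα0, hαt⟩ := hα
    have h' : α ^ 2 + a ^ 2 = t * α := by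
      field_simp at hαt
      linear_combination hαt
    simp only [Finset.mem_coe, Set.mem_toFinset, Set.mem_setOf_eq]
    linear_combination h' + t * α * h3
  · intro x hx
    simp only [Finset.mem_coe, Set.mem_toFinset, Set.mem_setOf_eq] at hx
    have hα0 : x - t ≠ 0 := by
      intro h
      have hxt : x = t := by linear_combination h
      rw [hxt] at hx
      have : a ^ 2 = 0 := by linear_combination hx
      exact ha (pow_eq_zero_iff (n := 2) (by norm_num) |>.mp this)
    simp only [Finset.mem_coe, Finset.mem_filter, Finset.mem_univ, true_and]
    refine ⟨hα0, ?_⟩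
    field_simp
    linear_combination hx + (t ^ 2 - t * x) * h3
  · intro α _; ring
  · intro x _; ring

lemma chi_rel (r : ℕ) (ε a t : Fq r) (hε : ¬ IsSquare ε) (ha : a ≠ 0) :
    quadraticChar (Fq r) (((-(a⁻¹ * t)) ^ 2 - 1) * ε⁻¹)
      + quadraticChar (Fq r) (t ^ 2 - a ^ 2) = 0 := by
  have hε0 : ε ≠ 0 := fun h => hε (h ▸ ⟨0, (mul_zero 0).symm⟩)
  have key : t ^ 2 - a ^ 2 = (((-(a⁻¹ * t)) ^ 2 - 1) * ε⁻¹) * (a ^ 2 * ε) := by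
    field_simp
  have hmul : (quadraticChar (Fq r)) (((-(a⁻¹ * t)) ^ 2 - 1) * ε⁻¹ * (a ^ 2 * ε))
      = (quadraticChar (Fq r)) (((-(a⁻¹ * t)) ^ 2 - 1) * ε⁻¹)
        * ((quadraticChar (Fq r)) (a ^ 2) * (quadraticChar (Fq r)) ε) := by
    rw [_root_.map_mul, _root_.map_mul, _root_.map_mul]
  rw [key, hmul, quadraticChar_sq_one' ha,
    quadraticChar_neg_one_iff_not_isSquare.mpr hε]
  ring

theorem stmt3 (r : ℕ) (hr : 0 < r) (ε : Fq r) (hε : ¬ IsSquare ε)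
    (a : Fq r) (ha : a ≠ 0) :
    ∑ w ∈ SOminus2 r ε, lam r (a * w.trace) = -Kl r (a ^ 2) := by
  classical
  have hε0 : ε ≠ 0 := fun h => hε (h ▸ ⟨0, (mul_zero 0).symm⟩)
  have h3 := three_eq_zero r
  -- counting functions
  set NL : Fq r → ℕ := fun α =>
    ((Finset.univ : Finset (Fq r)).filter (fun β => α ^ 2 - ε * β ^ 2 = 1)).card with hNL
  set NK : Fq r → ℕ := fun t =>
    (((Finset.univ : Finset (Fq r)).filter (fun α => α ≠ 0)).filter
      (fun α => α + a ^ 2 * α⁻¹ = t)).card with hNK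
  -- Step A: LHS as a sum over pairs
  have stepA : ∑ w ∈ SOminus2 r ε, lam r (a * w.trace)
      = ∑ p ∈ (Finset.univ : Finset (Fq r × Fq r)).filter
          (fun p => p.1 ^ 2 - ε * p.2 ^ 2 = 1), lam r (a * (p.1 + p.1)) := by
    apply Finset.sum_nbij' (fun w => (w 0 0, w 1 0)) (fun p => !![p.1, p.2 * ε; p.2, p.1])
    · intro w hw
      simp only [SOminus2, Finset.mem_filter, Finset.mem_univ, true_and] at hw
      obtain ⟨α, β, hab, rfl⟩ := hw
      simp only [Finset.mem_filter, Finset.mem_univ, true_and]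
      simpa using hab
    · intro p hp
      simp only [Finset.mem_filter, Finset.mem_univ, true_and] at hp
      simp only [SOminus2, Finset.mem_filter, Finset.mem_univ, true_and]
      exact ⟨p.1, p.2, hp, rfl⟩
    · intro w hw
      simp only [SOminus2, Finset.mem_filter, Finset.mem_univ, true_and] at hw
      obtain ⟨α, β, hab, rfl⟩ := hw
      simp
    · intro p _
      simp
    · intro w hw
      simp only [SOminus2, Finset.mem_filter, Finset.mem_univ, true_and] at hw
      obtain ⟨α, β, hab, rfl⟩ := hw
      simp [Matrix.trace_fin_two]
  -- Step B: group by first coordinate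
  have stepB : ∑ p ∈ (Finset.univ : Finset (Fq r × Fq r)).filter
        (fun p => p.1 ^ 2 - ε * p.2 ^ 2 = 1), lam r (a * (p.1 + p.1))
      = ∑ α : Fq r, (NL α : ℂ) * lam r (a * (α + α)) := by
    rw [Finset.sum_filter, Fintype.sum_prod_type]
    refine Finset.sum_congr rfl fun α _ => ?_
    show (∑ β : Fq r, if α ^ 2 - ε * β ^ 2 = 1 then lam r (a * (α + α)) else 0)
        = (NL α : ℂ) * lam r (a * (α + α))
    rw [← Finset.sum_filter, Finset.sum_const, nsmul_eq_mul, hNL]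
  -- Step C: reindex α ↦ t = a * (α + α)
  have stepC : ∑ α : Fq r, (NL α : ℂ) * lam r (a * (α + α))
      = ∑ t : Fq r, (NL (-(a⁻¹ * t)) : ℂ) * lam r t := by
    apply Finset.sum_nbij' (fun α => a * (α + α)) (fun t => -(a⁻¹ * t))
    · intro α _; exact Finset.mem_univ _
    · intro t _; exact Finset.mem_univ _
    · intro α _
      field_simp
      linear_combination (-α) * h3
    · intro t _
      field_simp
      linear_combination (-t) * h3
    · intro α _
      have hrw : -(a⁻¹ * (a * (α + α))) = α := by
        field_simp
        linear_combination (-α) * h3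
      rw [hrw]
  -- K as a fiberwise sum
  have hK : Kl r (a ^ 2) = ∑ t : Fq r, (NK t : ℂ) * lam r t := by
    unfold Kl
    rw [← Finset.sum_fiberwise_of_maps_to'
      (g := fun α : Fq r => α + a ^ 2 * α⁻¹) (t := Finset.univ)
      (fun x _ => Finset.mem_univ _) (lam r)]
    refine Finset.sum_congr rfl fun t _ => ?_
    rw [Finset.sum_const, nsmul_eq_mul, hNK]
  -- pointwise relation
  have hpt : ∀ t : Fq r, (NL (-(a⁻¹ * t)) : ℂ) = 2 - (NK t : ℂ) := by
    intro t
    have hL := countL r ε hε0 (-(a⁻¹ * t))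
    have hKc := countK r a ha t
    have hrel := chi_rel r ε a t hε ha
    have hz : (NL (-(a⁻¹ * t)) : ℤ) + (NK t : ℤ) = 2 := by
      simp only [hNL, hNK]
      rw [hL, hKc]
      linear_combination hrel
    have h2 : (NL (-(a⁻¹ * t)) : ℂ) + (NK t : ℂ) = 2 := by exact_mod_cast hz
    linear_combination h2
  rw [stepA, stepB, stepC, hK]
  have hsub : ∑ t : Fq r, (NL (-(a⁻¹ * t)) : ℂ) * lam r t
      = ∑ t : Fq r, (2 - (NK t : ℂ)) * lam r t :=
    Finset.sum_congr rfl fun t _ => by rw [hpt t]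
  rw [hsub]
  simp_rw [sub_mul]
  rw [Finset.sum_sub_distrib, ← Finset.mul_sum, sum_lam r, mul_zero, zero_sub]
end
end

section
/- For every integer m ≥ 0 and every β ∈ F_q, Σ_{a ∈ F_q^*} λ(−aβ) · K(λ; a²)^m = q·δ(m,q;β) − (q−1)^m. -/
open scoped BigOperators Classical

noncomputable section

/-- `δ(m, q; β)`, the number of `m`-tuples of nonzero elements with
`α₁ + α₁⁻¹ + ⋯ + α_m + α_m⁻¹ = β`; for `m = 0` it is `1` if `β = 0` and `0` otherwise. -/
def deltaCount (r m : ℕ) (β : Fq r) : ℕ :=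
  (Finset.univ.filter
    (fun α : Fin m → Fq r => (∀ i, α i ≠ 0) ∧ ∑ i, (α i + (α i)⁻¹) = β)).card

def zet : ℂ := Complex.exp (2 * Real.pi * Complex.I / 3)

lemma zet_pow : zet ^ 3 = 1 := by
  rw [zet, ← Complex.exp_nat_mul]
  rw [show ((3:ℕ):ℂ) * (2 * Real.pi * Complex.I / 3) = 2 * Real.pi * Complex.I by push_cast; ring]
  exact Complex.exp_two_pi_mul_I

lemma zet_ne_one : zet ≠ 1 :=
  (Complex.isPrimitiveRoot_exp 3 (by norm_num)).ne_one (by norm_num)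

def psi (r : ℕ) : AddChar (Fq r) ℂ :=
  (AddChar.zmodChar 3 zet_pow).compAddMonoidHom (Algebra.trace (ZMod 3) (Fq r)).toAddMonoidHom

lemma lam_eq_psi (r : ℕ) (x : Fq r) : lam r x = psi r x := by
  simp only [psi, AddChar.compAddMonoidHom_apply, LinearMap.toAddMonoidHom_coe,
    AddChar.zmodChar_apply, lam, zet, ← Complex.exp_nat_mul]
  congr 1
  ring

lemma psi_ne_one (r : ℕ) : psi r ≠ 1 := by
  obtain ⟨x, hx⟩ := Algebra.trace_surjective (ZMod 3) (Fq r) 1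
  intro h
  have h2 := congrArg (fun ψ : AddChar (Fq r) ℂ => ψ x) h
  simp only [psi, AddChar.compAddMonoidHom_apply, LinearMap.toAddMonoidHom_coe,
    AddChar.zmodChar_apply, hx, AddChar.one_apply] at h2
  rw [show (1 : ZMod 3).val = 1 by decide, pow_one] at h2
  exact zet_ne_one h2

lemma psi_prim (r : ℕ) : AddChar.IsPrimitive (psi r) :=
  AddChar.IsPrimitive.of_ne_one (psi_ne_one r)

lemma card_Fq (r : ℕ) (hr : 0 < r) : (Fintype.card (Fq r) : ℂ) = (3:ℂ)^r := by
  rw [← Nat.card_eq_fintype_card, GaloisField.card 3 r hr.ne']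
  push_cast; ring

lemma sum_psi_ne_zero (r : ℕ) (hr : 0 < r) (t : Fq r) :
    ∑ a ∈ Finset.univ.filter (fun a : Fq r => a ≠ 0), psi r (a * t)
      = (if t = 0 then (3:ℂ)^r else 0) - 1 := by
  have key : psi r (0 * t) + ∑ a ∈ Finset.univ.erase 0, psi r (a * t)
      = ∑ a : Fq r, psi r (a * t) :=
    Finset.add_sum_erase (Finset.univ : Finset (Fq r)) (fun a => psi r (a * t))
      (Finset.mem_univ 0)
  rw [AddChar.sum_mulShift t (psi_prim r), zero_mul, AddChar.map_zero_eq_one] at key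
  rw [Finset.filter_ne', eq_sub_iff_add_eq, add_comm, key]
  split_ifs <;> simp [card_Fq r hr]

lemma Kl_sq (r : ℕ) {a : Fq r} (ha : a ≠ 0) :
    Kl r (a ^ 2) = ∑ γ ∈ Finset.univ.filter (fun γ : Fq r => γ ≠ 0),
      lam r (a * (γ + γ⁻¹)) := by
  rw [Kl]
  refine Finset.sum_equiv (Equiv.mulLeft₀ a⁻¹ (inv_ne_zero ha)) ?_ ?_
  · intro α
    simp [mul_eq_zero, ha, inv_ne_zero]
  · intro α hα
    simp only [Finset.mem_filter, Finset.mem_univ, true_and] at hα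
    congr 1
    simp only [Equiv.mulLeft₀, Equiv.coe_fn_mk, Units.mulLeft_apply, Units.val_mk0]
    field_simp

lemma psi_sum (r : ℕ) : ∀ (n : ℕ) (c : Fin n → Fq r),
    ∏ i, psi r (c i) = psi r (∑ i, c i) := by
  intro n
  induction n with
  | zero => simp
  | succ n ih =>
      intro c
      rw [Fin.prod_univ_succ, Fin.sum_univ_succ, AddChar.map_add_eq_mul, ih]

theorem stmt11 (r : ℕ) (hr : 0 < r) (m : ℕ) (β : Fq r) :
    ∑ a ∈ Finset.univ.filter (fun a : Fq r => a ≠ 0), lam r (-a * β) * Kl r (a ^ 2) ^ m =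
      (3 : ℂ) ^ r * (deltaCount r m β : ℂ) - ((3 : ℂ) ^ r - 1) ^ m := by
  classical
  set S := Finset.univ.filter (fun a : Fq r => a ≠ 0) with hS
  set P := Fintype.piFinset (fun _ : Fin m => S) with hP
  have h1 : ∀ a ∈ S, lam r (-a * β) * Kl r (a ^ 2) ^ m
      = ∑ f ∈ P, psi r (a * ((∑ i, (f i + (f i)⁻¹)) - β)) := by
    intro a ha
    have ha' : a ≠ 0 := (Finset.mem_filter.mp ha).2
    rw [Kl_sq r ha', ← Fin.prod_const m, Finset.prod_univ_sum, Finset.mul_sum]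
    refine Finset.sum_congr rfl fun f hf => ?_
    simp only [lam_eq_psi]
    rw [psi_sum r m (fun i => a * (f i + (f i)⁻¹)), ← AddChar.map_add_eq_mul]
    congr 1
    rw [← Finset.mul_sum, mul_sub]
    ring
  rw [Finset.sum_congr rfl h1, Finset.sum_comm]
  have h2 : ∀ f ∈ P, ∑ a ∈ S, psi r (a * ((∑ i, (f i + (f i)⁻¹)) - β))
      = (if (∑ i, (f i + (f i)⁻¹)) - β = 0 then (3:ℂ)^r else 0) - 1 :=
    fun f _ => sum_psi_ne_zero r hr _
  rw [Finset.sum_congr rfl h2, Finset.sum_sub_distrib, Finset.sum_const, ← Finset.sum_filter,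
    Finset.sum_const]
  have h3 : P.filter (fun f => (∑ i, (f i + (f i)⁻¹)) - β = 0)
      = Finset.univ.filter
        (fun f : Fin m → Fq r => (∀ i, f i ≠ 0) ∧ ∑ i, (f i + (f i)⁻¹) = β) := by
    ext f
    simp [hP, hS, Fintype.mem_piFinset, sub_eq_zero]
  have hPcard : (P.card : ℂ) = ((3:ℂ)^r - 1) ^ m := by
    rw [hP, Fintype.card_piFinset]
    have hScard : (S.card : ℂ) = (3:ℂ)^r - 1 := by
      rw [hS, Finset.filter_ne', Finset.card_erase_of_mem (Finset.mem_univ 0)]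
      have h1le : 1 ≤ Fintype.card (Fq r) := Fintype.card_pos
      rw [Finset.card_univ, Nat.cast_sub h1le, card_Fq r hr, Nat.cast_one]
    push_cast
    rw [Finset.prod_const, Finset.card_univ, Fintype.card_fin, hScard]
  rw [h3, ← deltaCount, nsmul_eq_mul, nsmul_eq_mul, mul_one, hPcard, mul_comm]
end
end
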